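/- Let p be a prime. The group SL(4, ℤ[1/p]) is finitely generated. -/

import Mathlib

open Matrix

namespace SL4FG


set_option linter.unusedSectionVars false

variable {R : Type*} [CommRing R] [Nontrivial R]

abbrev SL4 (R : Type*) [CommRing R] := Matrix.SpecialLinearGroup (Fin 4) R

/-- A transvection as an element of `SL4`. -/
def Tv (i j : Fin 4) (h : i ≠ j) (c : R) : SL4 R :=
  ⟨transvection i j c, det_transvection_of_ne i j h c⟩

@[simp] lemma Tv_coe (i j : Fin 4) (h : i ≠ j) (c : R) :
    ((Tv i j h c : SL4 R) : Matrix (Fin 4) (Fin 4) R) = transvection i j c := rfl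

lemma Tv_mul (i j : Fin 4) (h : i ≠ j) (c d : R) :
    (Tv i j h c : SL4 R) * Tv i j h d = Tv i j h (c + d) :=
  Subtype.ext (transvection_mul_transvection_same i j h c d)

@[simp] lemma Tv_zero (i j : Fin 4) (h : i ≠ j) : (Tv i j h (0:R)) = 1 :=
  Subtype.ext (transvection_zero i j)

lemma Tv_inv (i j : Fin 4) (h : i ≠ j) (c : R) : (Tv i j h c)⁻¹ = Tv i j h (-c) := by
  apply inv_eq_of_mul_eq_one_right
  rw [Tv_mul, add_neg_cancel, Tv_zero]

/-- "Bordered up to `k`": the first `k` rows and columns agree with the identity matrix. -/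
def Bor (k : ℕ) (M : Matrix (Fin 4) (Fin 4) R) : Prop :=
  ∀ i j : Fin 4, ((i:ℕ) < k ∨ (j:ℕ) < k) → M i j = if i = j then 1 else 0

lemma bor_top {k : ℕ} (hk : 4 ≤ k) {A : SL4 R} (hA : Bor k (A : Matrix (Fin 4) (Fin 4) R)) :
    A = 1 := by
  apply Subtype.ext
  ext i j
  rw [hA i j (Or.inl (lt_of_lt_of_le i.isLt hk))]
  simp [Matrix.SpecialLinearGroup.coe_one, Matrix.one_apply]

lemma bor_row_op {k : ℕ} {M : Matrix (Fin 4) (Fin 4) R} (hM : Bor k M) {i j : Fin 4}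
    (hi : k ≤ (i:ℕ)) (hj : k ≤ (j:ℕ)) (c : R) : Bor k (transvection i j c * M) := by
  intro a b hab
  by_cases hai : a = i
  · subst hai
    have hb : (b:ℕ) < k := by rcases hab with h | h <;> omega
    rw [transvection_mul_apply_same]
    have h1 : M a b = 0 := by
      rw [hM a b (Or.inr hb), if_neg]
      intro h; subst h; omega
    have h2 : M j b = 0 := by
      rw [hM j b (Or.inr hb), if_neg]
      intro h; subst h; omega
    rw [h1, h2, if_neg]
    · ring
    · intro h; subst h; omega
  · rw [transvection_mul_apply_of_ne _ _ _ _ hai]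
    exact hM a b hab

lemma bor_col_op {k : ℕ} {M : Matrix (Fin 4) (Fin 4) R} (hM : Bor k M) {i j : Fin 4}
    (hi : k ≤ (i:ℕ)) (hj : k ≤ (j:ℕ)) (c : R) : Bor k (M * transvection i j c) := by
  intro a b hab
  by_cases hbj : b = j
  · subst hbj
    have hb : (a:ℕ) < k := by rcases hab with h | h <;> omega
    rw [mul_transvection_apply_same]
    have h1 : M a b = 0 := by
      rw [hM a b (Or.inl hb), if_neg]
      intro h; subst h; omega
    have h2 : M a i = 0 := by
      rw [hM a i (Or.inl hb), if_neg]
      intro h; subst h; omega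
    rw [h1, h2, if_neg]
    · ring
    · intro h; subst h; omega
  · rw [mul_transvection_apply_of_ne _ _ _ _ hbj]
    exact hM a b hab

theorem engine (δ : R → ℕ)
    (hdiv : ∀ x y : R, y ≠ 0 → ∃ q : R, δ (x - q * y) < δ y)
    (H : Subgroup (SL4 R)) (hT : ∀ (i j : Fin 4) (h : i ≠ j) (c : R), Tv i j h c ∈ H) :
    ∀ A : SL4 R, A ∈ H := by
  classical
  have cancel : ∀ (i j : Fin 4) (h : i ≠ j) (c : R) (A : SL4 R),
      Tv i j h c * A ∈ H → A ∈ H :=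
    fun i j h c A hA => (Subgroup.mul_mem_cancel_left H (hT i j h c)).1 hA
  suffices key : ∀ (n k : ℕ), 4 ≤ k + n → ∀ A : SL4 R,
      Bor k (A : Matrix (Fin 4) (Fin 4) R) → A ∈ H by
    intro A
    refine key 4 0 (by norm_num) A ?_
    intro i j h
    rcases h with h | h <;> omega
  intro n
  induction n with
  | zero =>
    intro k hk A hA
    rw [bor_top (by omega) hA]; exact one_mem H
  | succ n IH =>
    intro k hk A₀ hA₀
    by_cases hk4' : 4 ≤ k
    · rw [bor_top hk4' hA₀]; exact one_mem H
    push_neg at hk4'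
    set κ : Fin 4 := ⟨k, hk4'⟩ with hκdef
    have hκval : (κ : ℕ) = k := rfl
    -- clearing the row to the right of the pivot
    have rowClear : ∀ s : ℕ, ∀ A : SL4 R, Bor k (A : Matrix (Fin 4) (Fin 4) R) →
        (∀ i : Fin 4, (A : Matrix (Fin 4) (Fin 4) R) i κ = if i = κ then 1 else 0) →
        (∀ j : Fin 4, k < (j:ℕ) → s ≤ (j:ℕ) → (A : Matrix (Fin 4) (Fin 4) R) κ j = 0) →
        A ∈ H := by
      intro s
      induction s with
      | zero =>
        intro A hA hcol hrow
        refine IH (k+1) (by omega) A ?_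
        intro i j hij
        by_cases h0 : (i:ℕ) < k ∨ (j:ℕ) < k
        · exact hA i j h0
        push_neg at h0
        obtain ⟨h0i, h0j⟩ := h0
        rcases hij with hi | hj
        · have hiκ : i = κ := Fin.ext (by omega)
          subst hiκ
          by_cases hjκ : j = κ
          · subst hjκ; rw [hcol κ]
          · have hj' : k < (j:ℕ) := by
              rcases lt_or_eq_of_le h0j with h | h
              · exact h
              · exact absurd (Fin.ext h.symm : j = κ) hjκ
            rw [hrow j hj' (by omega), if_neg (fun h => hjκ h.symm)]
        · have hjκ : j = κ := Fin.ext (by omega)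
          subst hjκ
          rw [hcol i]
      | succ s IHs =>
        intro A hA hcol hrow
        by_cases hs : k < s ∧ s < 4
        · set jm : Fin 4 := ⟨s, hs.2⟩ with hjmdef
          have hκjm : κ ≠ jm := by
            intro h
            have : k = s := congrArg Fin.val h
            omega
          set c : R := (A : Matrix (Fin 4) (Fin 4) R) κ jm with hcdef
          set A' : SL4 R := A * Tv κ jm hκjm (-c) with hA'def
          have hA'coe : (A' : Matrix (Fin 4) (Fin 4) R)
              = (A : Matrix (Fin 4) (Fin 4) R) * transvection κ jm (-c) := rfl
          have hA'bor : Bor k (A' : Matrix (Fin 4) (Fin 4) R) := by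
            rw [hA'coe]
            exact bor_col_op hA (le_of_eq hκval.symm) (le_of_lt hs.1) _
          have hA'col : ∀ i : Fin 4,
              (A' : Matrix (Fin 4) (Fin 4) R) i κ = if i = κ then 1 else 0 := by
            intro i
            rw [hA'coe, mul_transvection_apply_of_ne _ _ _ _ hκjm]
            exact hcol i
          have hA'row : ∀ j : Fin 4, k < (j:ℕ) → s ≤ (j:ℕ) →
              (A' : Matrix (Fin 4) (Fin 4) R) κ j = 0 := by
            intro j hj1 hj2
            by_cases hjm : j = jm
            · subst hjm
              rw [hA'coe, mul_transvection_apply_same]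
              have h1 : (A : Matrix (Fin 4) (Fin 4) R) κ κ = 1 := by
                rw [hcol κ, if_pos rfl]
              rw [h1, ← hcdef]
              ring
            · rw [hA'coe, mul_transvection_apply_of_ne _ _ _ _ hjm]
              refine hrow j hj1 ?_
              have : (j:ℕ) ≠ s := fun h => hjm (Fin.ext h)
              omega
          have hA'H : A' ∈ H := IHs A' hA'bor hA'col hA'row
          have : A' * Tv κ jm hκjm c = A := by
            rw [hA'def, mul_assoc, Tv_mul, neg_add_cancel, Tv_zero, mul_one]
          rw [← this]
          exact mul_mem hA'H (hT _ _ _ _)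
        · refine IHs A hA hcol ?_
          intro j hj1 hj2
          refine hrow j hj1 ?_
          have := j.isLt
          omega
    -- column reduction by strong induction on the measure
    have colStep : ∀ N : ℕ, ∀ A : SL4 R, Bor k (A : Matrix (Fin 4) (Fin 4) R) →
        (∑ i : Fin 4, δ ((A : Matrix (Fin 4) (Fin 4) R) i κ)) ≤ N → A ∈ H := by
      intro N
      induction N using Nat.strong_induction_on with
      | _ N IHN =>
      intro A hA hsum
      have hw : ∑ i : Fin 4, ((A⁻¹ : SL4 R) : Matrix (Fin 4) (Fin 4) R) κ i
          * (A : Matrix (Fin 4) (Fin 4) R) i κ = 1 := by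
        have h1 : ((A⁻¹ : SL4 R) : Matrix (Fin 4) (Fin 4) R)
            * (A : Matrix (Fin 4) (Fin 4) R) = 1 := by
          rw [← Matrix.SpecialLinearGroup.coe_mul, inv_mul_cancel,
            Matrix.SpecialLinearGroup.coe_one]
        have h2 := congrFun (congrFun h1 κ) κ
        rw [Matrix.mul_apply] at h2
        simpa [Matrix.one_apply] using h2
      have hFne : (Finset.univ.filter
          (fun i => (A : Matrix (Fin 4) (Fin 4) R) i κ ≠ 0)).Nonempty := by
        by_contra hF
        rw [Finset.not_nonempty_iff_eq_empty] at hF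
        have hz : ∀ i : Fin 4, (A : Matrix (Fin 4) (Fin 4) R) i κ = 0 := by
          intro i
          by_contra hvi
          have hmem : i ∈ Finset.univ.filter
              (fun i => (A : Matrix (Fin 4) (Fin 4) R) i κ ≠ 0) := by
            simp [hvi]
          rw [hF] at hmem
          exact absurd hmem (Finset.notMem_empty i)
        rw [Finset.sum_congr rfl (fun i _ => by rw [hz i, mul_zero])] at hw
        simp at hw
      obtain ⟨j, hjF, hjmin⟩ := Finset.exists_min_image _
        (fun i => δ ((A : Matrix (Fin 4) (Fin 4) R) i κ)) hFne
      have hvj : (A : Matrix (Fin 4) (Fin 4) R) j κ ≠ 0 := (Finset.mem_filter.1 hjF).2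
      have hmemk : ∀ i : Fin 4, (A : Matrix (Fin 4) (Fin 4) R) i κ ≠ 0 → k ≤ (i:ℕ) := by
        intro i hi
        by_contra hik
        push_neg at hik
        have h1 := hA i κ (Or.inl hik)
        rw [if_neg (fun h => by
          have := congrArg Fin.val h
          simp only [hκval] at this
          omega)] at h1
        exact hi h1
      by_cases hex : ∃ i : Fin 4, (A : Matrix (Fin 4) (Fin 4) R) i κ ≠ 0 ∧ i ≠ j
      · obtain ⟨i, hiA, hij⟩ := hex
        have hiF : i ∈ Finset.univ.filter
            (fun i => (A : Matrix (Fin 4) (Fin 4) R) i κ ≠ 0) := by simp [hiA]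
        obtain ⟨q, hq⟩ := hdiv ((A : Matrix (Fin 4) (Fin 4) R) i κ)
          ((A : Matrix (Fin 4) (Fin 4) R) j κ) hvj
        have hA'coe : ((Tv i j hij (-q) * A : SL4 R) : Matrix (Fin 4) (Fin 4) R)
            = transvection i j (-q) * (A : Matrix (Fin 4) (Fin 4) R) := rfl
        have hA'bor : Bor k ((Tv i j hij (-q) * A : SL4 R) : Matrix (Fin 4) (Fin 4) R) := by
          rw [hA'coe]
          exact bor_row_op hA (hmemk i hiA) (hmemk j hvj) _
        have hother : ∀ m : Fin 4, m ≠ i →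
            ((Tv i j hij (-q) * A : SL4 R) : Matrix (Fin 4) (Fin 4) R) m κ
              = (A : Matrix (Fin 4) (Fin 4) R) m κ := by
          intro m hm
          rw [hA'coe, transvection_mul_apply_of_ne _ _ _ _ hm]
        have hentryi : ((Tv i j hij (-q) * A : SL4 R) : Matrix (Fin 4) (Fin 4) R) i κ
            = (A : Matrix (Fin 4) (Fin 4) R) i κ - q * (A : Matrix (Fin 4) (Fin 4) R) j κ := by
          rw [hA'coe, transvection_mul_apply_same]
          ring
        have hstep : δ (((Tv i j hij (-q) * A : SL4 R) : Matrix (Fin 4) (Fin 4) R) i κ)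
            < δ ((A : Matrix (Fin 4) (Fin 4) R) i κ) := by
          rw [hentryi]
          exact lt_of_lt_of_le hq (hjmin i hiF)
        have hlt : ∑ m : Fin 4, δ (((Tv i j hij (-q) * A : SL4 R) : Matrix (Fin 4) (Fin 4) R) m κ)
            < ∑ m : Fin 4, δ ((A : Matrix (Fin 4) (Fin 4) R) m κ) := by
          refine Finset.sum_lt_sum (fun m _ => ?_) ⟨i, Finset.mem_univ i, hstep⟩
          by_cases hmi : m = i
          · subst hmi
            exact le_of_lt hstep
          · rw [hother m hmi]
        have hA'H : Tv i j hij (-q) * A ∈ H :=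
          IHN (∑ m : Fin 4, δ (((Tv i j hij (-q) * A : SL4 R) : Matrix (Fin 4) (Fin 4) R) m κ))
            (lt_of_lt_of_le hlt hsum) _ hA'bor le_rfl
        exact cancel i j hij (-q) A hA'H
      · push_neg at hex
        have hvz : ∀ i : Fin 4, i ≠ j → (A : Matrix (Fin 4) (Fin 4) R) i κ = 0 := by
          intro i hij
          by_contra h
          exact hij (hex i h)
        have hwj : ((A⁻¹ : SL4 R) : Matrix (Fin 4) (Fin 4) R) κ j
            * (A : Matrix (Fin 4) (Fin 4) R) j κ = 1 := by
          refine Eq.trans ?_ hw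
          symm
          refine Finset.sum_eq_single j (fun b _ hb => ?_) (fun h => absurd (Finset.mem_univ j) h)
          rw [hvz b hb, mul_zero]
        have hkj : k ≤ (j:ℕ) := hmemk j hvj
        by_cases hjκ : j = κ
        · subst hjκ
          by_cases hk3 : k + 1 < 4
          · have hi'κ : (⟨k+1, hk3⟩ : Fin 4) ≠ κ := by
              intro h
              have := congrArg Fin.val h
              simp only [hκval] at this
              omega
            -- abbreviations
            generalize he : ((A⁻¹ : SL4 R) : Matrix (Fin 4) (Fin 4) R) κ κ = e at hwj
            set i' : Fin 4 := ⟨k+1, hk3⟩ with hi'def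
            have hA₂coe : ((Tv i' κ hi'κ e * A : SL4 R) : Matrix (Fin 4) (Fin 4) R)
                = transvection i' κ e * (A : Matrix (Fin 4) (Fin 4) R) := rfl
            have hA₂i' : ((Tv i' κ hi'κ e * A : SL4 R) : Matrix (Fin 4) (Fin 4) R) i' κ = 1 := by
              rw [hA₂coe, transvection_mul_apply_same, hvz i' hi'κ, zero_add]
              exact hwj
            have hA₂other : ∀ m : Fin 4, m ≠ i' →
                ((Tv i' κ hi'κ e * A : SL4 R) : Matrix (Fin 4) (Fin 4) R) m κ
                  = (A : Matrix (Fin 4) (Fin 4) R) m κ := by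
              intro m hm
              rw [hA₂coe, transvection_mul_apply_of_ne _ _ _ _ hm]
            -- second op
            have hA₃coe : ((Tv κ i' (Ne.symm hi'κ) (1 - (A : Matrix (Fin 4) (Fin 4) R) κ κ)
                  * (Tv i' κ hi'κ e * A) : SL4 R) : Matrix (Fin 4) (Fin 4) R)
                = transvection κ i' (1 - (A : Matrix (Fin 4) (Fin 4) R) κ κ)
                  * ((Tv i' κ hi'κ e * A : SL4 R) : Matrix (Fin 4) (Fin 4) R) := rfl
            have hA₃κ : ((Tv κ i' (Ne.symm hi'κ) (1 - (A : Matrix (Fin 4) (Fin 4) R) κ κ)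
                  * (Tv i' κ hi'κ e * A) : SL4 R) : Matrix (Fin 4) (Fin 4) R) κ κ = 1 := by
              rw [hA₃coe, transvection_mul_apply_same, hA₂i', hA₂other κ (Ne.symm hi'κ)]
              ring
            have hA₃other : ∀ m : Fin 4, m ≠ κ →
                ((Tv κ i' (Ne.symm hi'κ) (1 - (A : Matrix (Fin 4) (Fin 4) R) κ κ)
                  * (Tv i' κ hi'κ e * A) : SL4 R) : Matrix (Fin 4) (Fin 4) R) m κ
                = ((Tv i' κ hi'κ e * A : SL4 R) : Matrix (Fin 4) (Fin 4) R) m κ := by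
              intro m hm
              rw [hA₃coe, transvection_mul_apply_of_ne _ _ _ _ hm]
            -- third op
            have hA₄coe : ((Tv i' κ hi'κ (-1)
                  * (Tv κ i' (Ne.symm hi'κ) (1 - (A : Matrix (Fin 4) (Fin 4) R) κ κ)
                  * (Tv i' κ hi'κ e * A)) : SL4 R) : Matrix (Fin 4) (Fin 4) R)
                = transvection i' κ (-1)
                  * ((Tv κ i' (Ne.symm hi'κ) (1 - (A : Matrix (Fin 4) (Fin 4) R) κ κ)
                  * (Tv i' κ hi'κ e * A) : SL4 R) : Matrix (Fin 4) (Fin 4) R) := rfl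
            have hA₄col : ∀ i : Fin 4,
                ((Tv i' κ hi'κ (-1)
                  * (Tv κ i' (Ne.symm hi'κ) (1 - (A : Matrix (Fin 4) (Fin 4) R) κ κ)
                  * (Tv i' κ hi'κ e * A)) : SL4 R) : Matrix (Fin 4) (Fin 4) R) i κ
                = if i = κ then 1 else 0 := by
              intro i
              by_cases h1 : i = i'
              · rw [hA₄coe, h1, transvection_mul_apply_same, hA₃κ, hA₃other i' hi'κ, hA₂i',
                  if_neg hi'κ]
                ring
              · rw [hA₄coe, transvection_mul_apply_of_ne _ _ _ _ h1]
                by_cases h2 : i = κ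
                · subst h2
                  rw [hA₃κ, if_pos rfl]
                · rw [hA₃other i h2, hA₂other i h1, if_neg h2]
                  exact hvz i h2
            have hki' : k ≤ ((⟨k+1, hk3⟩ : Fin 4) : ℕ) := by simp
            have hkκ : k ≤ (κ : ℕ) := le_of_eq hκval.symm
            have hA₄bor : Bor k ((Tv i' κ hi'κ (-1)
                  * (Tv κ i' (Ne.symm hi'κ) (1 - (A : Matrix (Fin 4) (Fin 4) R) κ κ)
                  * (Tv i' κ hi'κ e * A)) : SL4 R) : Matrix (Fin 4) (Fin 4) R) := by
              rw [hA₄coe, hA₃coe, hA₂coe]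
              exact bor_row_op (bor_row_op (bor_row_op hA hki' hkκ e) hkκ hki' _) hki' hkκ (-1)
            have hA₄H : Tv i' κ hi'κ (-1)
                  * (Tv κ i' (Ne.symm hi'κ) (1 - (A : Matrix (Fin 4) (Fin 4) R) κ κ)
                  * (Tv i' κ hi'κ e * A)) ∈ H := by
              refine rowClear 4 _ hA₄bor hA₄col ?_
              intro j' hj1 hj2
              have := j'.isLt
              omega
            exact cancel _ _ _ _ _ (cancel _ _ _ _ _ (cancel _ _ _ _ _ hA₄H))
          · -- k = 3 : A is diagonal with last entry d, and det forces d = 1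
            have hdet := A.2
            have hdiag : (A : Matrix (Fin 4) (Fin 4) R)
                = Matrix.diagonal (fun i => if i = κ then (A : Matrix (Fin 4) (Fin 4) R) κ κ
                    else 1) := by
              ext a b
              by_cases hab : a = b
              · subst hab
                by_cases haκ : a = κ
                · subst haκ
                  rw [Matrix.diagonal_apply_eq, if_pos rfl]
                · have ha3 : (a:ℕ) < k := by
                    have h1 := a.isLt
                    have hne : (a:ℕ) ≠ k := fun h => haκ (Fin.ext (h.trans hκval.symm))
                    omega
                  rw [hA a a (Or.inl ha3), Matrix.diagonal_apply_eq, if_pos rfl, if_neg haκ]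
              · rw [Matrix.diagonal_apply_ne _ hab]
                by_cases h0 : (a:ℕ) < k ∨ (b:ℕ) < k
                · rw [hA a b h0, if_neg hab]
                · push_neg at h0
                  have h4a := a.isLt
                  have h4b := b.isLt
                  have ha : a = κ := Fin.ext (by omega)
                  have hb : b = κ := Fin.ext (by omega)
                  exact absurd (ha.trans hb.symm) hab
            rw [hdiag, Matrix.det_diagonal, Fin.prod_univ_four] at hdet
            have hκ3 : κ = (3 : Fin 4) := Fin.ext (by simp [hκval]; omega)
            rw [hκ3] at hdet
            simp at hdet
            have hA1 : A = 1 := by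
              apply Subtype.ext
              rw [hdiag, hκ3, hdet]
              simp [Matrix.SpecialLinearGroup.coe_one]
            rw [hA1]
            exact one_mem H
        · -- j ≠ κ
          have hκj : κ ≠ j := Ne.symm hjκ
          generalize he : ((A⁻¹ : SL4 R) : Matrix (Fin 4) (Fin 4) R) κ j = e at hwj
          have hA₂coe : ((Tv κ j hκj e * A : SL4 R) : Matrix (Fin 4) (Fin 4) R)
              = transvection κ j e * (A : Matrix (Fin 4) (Fin 4) R) := rfl
          have hA₂κ : ((Tv κ j hκj e * A : SL4 R) : Matrix (Fin 4) (Fin 4) R) κ κ = 1 := by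
            rw [hA₂coe, transvection_mul_apply_same, hvz κ hκj, zero_add]
            exact hwj
          have hA₂other : ∀ m : Fin 4, m ≠ κ →
              ((Tv κ j hκj e * A : SL4 R) : Matrix (Fin 4) (Fin 4) R) m κ
                = (A : Matrix (Fin 4) (Fin 4) R) m κ := by
            intro m hm
            rw [hA₂coe, transvection_mul_apply_of_ne _ _ _ _ hm]
          have hA₃coe : ((Tv j κ hjκ (-(A : Matrix (Fin 4) (Fin 4) R) j κ)
                * (Tv κ j hκj e * A) : SL4 R) : Matrix (Fin 4) (Fin 4) R)
              = transvection j κ (-(A : Matrix (Fin 4) (Fin 4) R) j κ)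
                * ((Tv κ j hκj e * A : SL4 R) : Matrix (Fin 4) (Fin 4) R) := rfl
          have hA₃col : ∀ i : Fin 4,
              ((Tv j κ hjκ (-(A : Matrix (Fin 4) (Fin 4) R) j κ)
                * (Tv κ j hκj e * A) : SL4 R) : Matrix (Fin 4) (Fin 4) R) i κ
              = if i = κ then 1 else 0 := by
            intro i
            by_cases h1 : i = j
            · rw [hA₃coe, h1, transvection_mul_apply_same, hA₂κ, hA₂other j hjκ, if_neg hjκ]
              ring
            · rw [hA₃coe, transvection_mul_apply_of_ne _ _ _ _ h1]
              by_cases h2 : i = κ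
              · subst h2
                rw [hA₂κ, if_pos rfl]
              · rw [hA₂other i h2, if_neg h2]
                exact hvz i h1
          have hkκ : k ≤ (κ : ℕ) := le_of_eq hκval.symm
          have hA₃bor : Bor k ((Tv j κ hjκ (-(A : Matrix (Fin 4) (Fin 4) R) j κ)
                * (Tv κ j hκj e * A) : SL4 R) : Matrix (Fin 4) (Fin 4) R) := by
            rw [hA₃coe, hA₂coe]
            exact bor_row_op (bor_row_op hA hkκ hkj e) hkj hkκ _
          have hA₃H : Tv j κ hjκ (-(A : Matrix (Fin 4) (Fin 4) R) j κ)
                * (Tv κ j hκj e * A) ∈ H := by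
            refine rowClear 4 _ hA₃bor hA₃col ?_
            intro j' hj1 hj2
            have := j'.isLt
            omega
          exact cancel _ _ _ _ _ (cancel _ _ _ _ _ hA₃H)
    exact colStep (∑ i : Fin 4, δ ((A₀ : Matrix (Fin 4) (Fin 4) R) i κ)) A₀ hA₀ le_rfl

lemma Tv_pow (i j : Fin 4) (h : i ≠ j) (c : R) (m : ℕ) :
    (Tv i j h c) ^ m = Tv i j h ((m : R) * c) := by
  induction m with
  | zero => simp
  | succ m IHm =>
    rw [pow_succ, IHm, Tv_mul]
    congr 1
    push_cast
    ring

lemma Tv_zpow (i j : Fin 4) (h : i ≠ j) (c : R) (z : ℤ) :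
    (Tv i j h c) ^ z = Tv i j h ((z : R) * c) := by
  cases z with
  | ofNat m => rw [Int.ofNat_eq_coe, zpow_natCast, Tv_pow]; norm_num
  | negSucc m =>
    rw [zpow_negSucc, Tv_pow, Tv_inv]
    congr 1
    push_cast
    ring

def Dm (π ρ : R) (hρ : π * ρ = 1) (i j : Fin 4) (hij : i ≠ j) : SL4 R :=
  ⟨Matrix.diagonal (fun m => if m = i then π else if m = j then ρ else 1), by
    rw [Matrix.det_diagonal, Fin.prod_univ_four]
    fin_cases i <;> fin_cases j <;> simp_all <;> linear_combination hρ⟩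

lemma transvection_apply' (i j : Fin 4) (c : R) (a b : Fin 4) :
    transvection i j c a b = (if a = b then 1 else 0) + (if i = a ∧ j = b then c else 0) := by
  simp [transvection, Matrix.single_apply, Matrix.one_apply]

lemma Dm_mul_Tv (π ρ : R) (hρ : π * ρ = 1) (i j : Fin 4) (hij : i ≠ j) (c : R) :
    Dm π ρ hρ i j hij * Tv i j hij c
      = Tv i j hij (π * π * c) * Dm π ρ hρ i j hij := by
  apply Subtype.ext
  show Matrix.diagonal _ * transvection i j c
    = transvection i j (π * π * c) * Matrix.diagonal _
  ext a b
  rw [Matrix.diagonal_mul, Matrix.mul_diagonal, transvection_apply', transvection_apply']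
  by_cases hab : a = b
  · subst hab
    have hno : ¬(i = a ∧ j = a) := fun h => hij (h.1.trans h.2.symm)
    simp [hno]
  · by_cases hai : i = a
    · by_cases hbj : j = b
      · subst hai; subst hbj
        simp only [if_neg hab, and_self, if_pos rfl, true_and, zero_add, if_true, ite_true,
          if_neg (show ¬ i = j from hab), if_neg (show ¬ j = i from fun h => hab h.symm),
          if_pos (And.intro rfl rfl)]
        linear_combination (-(c*π))*hρ
      · simp [hab, hbj]
    · simp [hab, hai]

def genF (π ρ : R) (hρ : π * ρ = 1) : Fin 4 × Fin 4 × Fin 3 → SL4 R := fun t =>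
  if h : t.1 = t.2.1 then 1
  else if t.2.2 = 0 then Tv t.1 t.2.1 h 1
  else if t.2.2 = 1 then Tv t.1 t.2.1 h ρ
  else Dm π ρ hρ t.1 t.2.1 h

lemma genF_one (π ρ : R) (hρ : π * ρ = 1) (i j : Fin 4) (h : i ≠ j) :
    Tv i j h 1 ∈ Set.range (genF π ρ hρ) :=
  ⟨(i, j, 0), by simp [genF, h]⟩

lemma genF_rho (π ρ : R) (hρ : π * ρ = 1) (i j : Fin 4) (h : i ≠ j) :
    Tv i j h ρ ∈ Set.range (genF π ρ hρ) :=
  ⟨(i, j, 1), by simp [genF, h]⟩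

lemma genF_Dm (π ρ : R) (hρ : π * ρ = 1) (i j : Fin 4) (h : i ≠ j) :
    Dm π ρ hρ i j h ∈ Set.range (genF π ρ hρ) :=
  ⟨(i, j, 2), by simp [genF, h]⟩


theorem closure_top (δ : R → ℕ)
    (hdiv : ∀ x y : R, y ≠ 0 → ∃ q : R, δ (x - q * y) < δ y)
    (π ρ : R) (hρ : π * ρ = 1)
    (hrep : ∀ x : R, ∃ (a : ℤ) (n : ℕ), x = (a : R) * ρ ^ n) :
    Subgroup.closure (Set.range (genF π ρ hρ)) = ⊤ := by
  rw [eq_top_iff]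
  intro A _
  refine engine δ hdiv _ ?_ A
  intro i j h c
  obtain ⟨a, n, rfl⟩ := hrep c
  have hpow : ∀ m : ℕ, Tv i j h (ρ ^ m) ∈ Subgroup.closure (Set.range (genF π ρ hρ)) := by
    intro m
    induction m using Nat.strong_induction_on with
    | _ m IHm =>
    rcases m with _ | m
    · rw [pow_zero]
      exact Subgroup.subset_closure (genF_one π ρ hρ i j h)
    rcases m with _ | m
    · rw [pow_one]
      exact Subgroup.subset_closure (genF_rho π ρ hρ i j h)
    · have hDm : Dm π ρ hρ i j h ∈ Subgroup.closure (Set.range (genF π ρ hρ)) :=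
        Subgroup.subset_closure (genF_Dm π ρ hρ i j h)
      have hid : Dm π ρ hρ i j h * Tv i j h (ρ ^ (m + 1 + 1))
          = Tv i j h (ρ ^ m) * Dm π ρ hρ i j h := by
        rw [Dm_mul_Tv]
        congr 2
        have h1 : π * π * ρ ^ (m + 1 + 1) = (π * ρ) ^ 2 * ρ ^ m := by ring
        rw [h1, hρ, one_pow, one_mul]
      have hTm : Tv i j h (ρ ^ m) ∈ Subgroup.closure (Set.range (genF π ρ hρ)) :=
        IHm m (by omega)
      have heq : Tv i j h (ρ ^ (m + 1 + 1))
          = (Dm π ρ hρ i j h)⁻¹ * (Tv i j h (ρ ^ m) * Dm π ρ hρ i j h) := by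
        rw [← hid, inv_mul_cancel_left]
      rw [heq]
      exact mul_mem (inv_mem hDm) (mul_mem hTm hDm)
  have hz : Tv i j h ((a : R) * ρ ^ n) = (Tv i j h (ρ ^ n)) ^ a := by rw [Tv_zpow]
  rw [hz]
  exact zpow_mem (hpow n) a



variable {p : ℕ}

local notation "Rp" => Localization.Away ((p : ℤ))

noncomputable def phi (hp : (p:ℤ) ≠ 0) : Rp →+* ℚ :=
  IsLocalization.lift (M := Submonoid.powers ((p:ℤ))) (g := Int.castRingHom ℚ)
    (by
      rintro ⟨y, n, rfl⟩
      simp only [Int.coe_castRingHom]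
      refine isUnit_iff_ne_zero.2 ?_
      exact_mod_cast pow_ne_zero n (by exact_mod_cast hp))

lemma phi_alg (hp : (p:ℤ) ≠ 0) (a : ℤ) : phi hp (algebraMap ℤ Rp a) = a :=
  IsLocalization.lift_eq _ a

lemma rep (x : Rp) : ∃ (a : ℤ) (n : ℕ),
    x * algebraMap ℤ Rp ((p:ℤ)^n) = algebraMap ℤ Rp a := by
  obtain ⟨⟨a, s⟩, h⟩ := IsLocalization.surj (Submonoid.powers ((p:ℤ))) x
  obtain ⟨n, hn⟩ := s.2
  exact ⟨a, n, by rw [show ((p:ℤ))^n = (s:ℤ) from hn]; exact h⟩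

lemma domainRp (hp : (p:ℤ) ≠ 0) : IsDomain Rp :=
  IsLocalization.isDomain_localization (by
    intro x hx
    obtain ⟨n, rfl⟩ := hx
    exact pow_mem (mem_nonZeroDivisors_of_ne_zero hp) n)

lemma phi_ne_zero (hp : (p:ℤ) ≠ 0) {x : Rp} (hx : x ≠ 0) : phi hp x ≠ 0 := by
  haveI := domainRp hp
  obtain ⟨a, n, h⟩ := rep x
  have h2 : phi hp x * ((p:ℚ))^n = (a : ℚ) := by
    have := congrArg (phi hp) h
    rw [_root_.map_mul, phi_alg, phi_alg] at this
    push_cast at this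
    exact this
  intro h0
  rw [h0, zero_mul] at h2
  have ha : a = 0 := by exact_mod_cast h2.symm
  rw [ha] at h
  simp only [map_zero] at h
  have hu : IsUnit (algebraMap ℤ Rp ((p:ℤ)^n)) :=
    IsLocalization.map_units Rp ⟨(p:ℤ)^n, pow_mem (Submonoid.mem_powers _) n⟩
  have := mul_eq_zero.1 h
  rcases this with h' | h'
  · exact hx h'
  · exact hu.ne_zero h'

lemma phi_eq_div (hp : (p:ℤ) ≠ 0) (x : Rp) {a : ℤ} {n : ℕ}
    (h : x * algebraMap ℤ Rp ((p:ℤ)^n) = algebraMap ℤ Rp a) :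
    phi hp x = Rat.divInt a ((p:ℤ)^n) := by
  have h2 : phi hp x * ((p:ℚ))^n = (a : ℚ) := by
    have := congrArg (phi hp) h
    rw [_root_.map_mul, phi_alg, phi_alg] at this
    push_cast at this
    exact this
  have hpn : ((p:ℚ))^n ≠ 0 := pow_ne_zero n (by exact_mod_cast hp)
  rw [Rat.divInt_eq_div]
  push_cast
  field_simp
  linarith [h2]

lemma den_pow (hpp : p.Prime) (x : Rp) :
    ∃ m : ℕ, ((phi (by exact_mod_cast hpp.ne_zero : (p:ℤ) ≠ 0) x).den : ℤ) = (p:ℤ)^m := by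
  have hp : (p:ℤ) ≠ 0 := by exact_mod_cast hpp.ne_zero
  obtain ⟨a, n, h⟩ := rep x
  rw [phi_eq_div hp x h]
  have hdvd : ((Rat.divInt a ((p:ℤ)^n)).den : ℤ) ∣ (p:ℤ)^n := Rat.den_dvd a _
  have hdvd' : (Rat.divInt a ((p:ℤ)^n)).den ∣ p^n := by
    have : ((Rat.divInt a ((p:ℤ)^n)).den : ℤ) ∣ ((p^n : ℕ) : ℤ) := by push_cast; exact hdvd
    exact_mod_cast this
  obtain ⟨m, _, hm⟩ := (Nat.dvd_prime_pow hpp).1 hdvd'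
  exact ⟨m, by rw [hm]; push_cast; ring⟩

/-- The Euclidean division property on ℤ[1/p]. -/
lemma eucDiv (hpp : p.Prime) (x y : Rp) (hy : y ≠ 0) :
    ∃ q : Rp, ((phi (by exact_mod_cast hpp.ne_zero) (x - q * y)).num.natAbs
      < (phi (by exact_mod_cast hpp.ne_zero) y).num.natAbs) := by
  have hp : (p:ℤ) ≠ 0 := by exact_mod_cast hpp.ne_zero
  obtain ⟨a, n, hx⟩ := rep x
  set b : ℤ := (phi hp y).num with hb_def
  have hb : b ≠ 0 := Rat.num_ne_zero.2 (phi_ne_zero hp hy)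
  obtain ⟨m, hm⟩ := den_pow hpp y
  -- division of a by b
  set B : ℤ := (b.natAbs : ℤ) with hB_def
  have hB0 : 0 < B := by
    have : b.natAbs ≠ 0 := Int.natAbs_ne_zero.2 hb
    omega
  set s : ℤ := a / B with hs_def
  set r : ℤ := a % B with hr_def
  have hr0 : 0 ≤ r := Int.emod_nonneg a (by omega)
  have hrB : r < B := Int.emod_lt_of_pos a hB0
  have ha : a = B * s + r := by exact (Int.mul_ediv_add_emod a B).symm
  obtain ⟨u, hu1, hub⟩ : ∃ u : ℤ, (u = 1 ∨ u = -1) ∧ B = u * b := by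
    rcases Int.natAbs_eq b with h | h
    · exact ⟨1, Or.inl rfl, by rw [one_mul, hB_def]; omega⟩
    · exact ⟨-1, Or.inr rfl, by rw [hB_def]; omega⟩
  obtain ⟨ρ, hρ⟩ := isUnit_iff_exists_inv.1
    (IsLocalization.map_units Rp (⟨(p:ℤ), Submonoid.mem_powers _⟩ : Submonoid.powers ((p:ℤ))))
  refine ⟨algebraMap ℤ Rp (s * u * (p:ℤ)^m) * ρ^n, ?_⟩
  have hpQ : ((p:ℚ)) ≠ 0 := by exact_mod_cast hp
  have hφρ : phi hp ρ = ((p:ℚ))⁻¹ := by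
    have := congrArg (phi hp) hρ
    rw [_root_.map_mul, _root_.map_one] at this
    rw [phi_alg] at this
    push_cast at this
    field_simp
    linarith [this]
  have hφx : phi hp x = (a:ℚ)/((p:ℚ))^n := by
    rw [phi_eq_div hp x hx, Rat.divInt_eq_div]; push_cast; ring
  have hφy : phi hp y = (b:ℚ)/((p:ℚ))^m := by
    have h2 : (((phi hp y).den : ℤ) : ℚ) = ((p:ℚ))^m := by
      rw [hm]; push_cast; ring
    rw [← Rat.num_div_den (phi hp y), ← hb_def]
    push_cast at h2 ⊢
    rw [h2]
  have key : phi hp (x - algebraMap ℤ Rp (s * u * (p:ℤ)^m) * ρ^n * y) = (r:ℚ)/((p:ℚ))^n := by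
    rw [map_sub, _root_.map_mul, _root_.map_mul, map_pow, phi_alg, hφρ, hφx, hφy]
    have haQ : (a:ℚ) = (B:ℚ) * s + r := by exact_mod_cast ha
    have hubQ : (B:ℚ) = u * b := by exact_mod_cast hub
    have hbQ : (b:ℚ) ≠ 0 := by exact_mod_cast hb
    push_cast
    rw [haQ, hubQ]
    simp only [inv_pow]
    field_simp
    ring
  rw [key]
  have hpnQ : ((p:ℤ))^n ≠ 0 := pow_ne_zero n hp
  have hdq : ((r:ℚ))/((p:ℚ))^n = Rat.divInt r ((p:ℤ)^n) := by
    rw [Rat.divInt_eq_div]; push_cast; ring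
  rw [hdq]
  have hnum : (Rat.divInt r ((p:ℤ)^n)).num ∣ r := Rat.num_dvd r hpnQ
  rcases eq_or_ne r 0 with hr | hr
  · rw [hr, Rat.zero_divInt]
    simpa using Int.natAbs_pos.2 hb
  · have h1 : (Rat.divInt r ((p:ℤ)^n)).num.natAbs ≤ r.natAbs :=
      Nat.le_of_dvd (Int.natAbs_pos.2 hr) (Int.natAbs_dvd_natAbs.2 hnum)
    have h2 : r.natAbs < b.natAbs := by omega
    omega


end SL4FG

/-- For a prime `p`, the group `SL(4, ℤ[1/p])` is finitely generated. -/
theorem sl4_fg (p : ℕ) (hp : p.Prime) :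
    Group.FG (Matrix.SpecialLinearGroup (Fin 4) (Localization.Away (p : ℤ))) := by
  have hpz : (p : ℤ) ≠ 0 := by exact_mod_cast hp.ne_zero
  haveI : IsDomain (Localization.Away ((p : ℤ))) := SL4FG.domainRp hpz
  obtain ⟨ρ, hρ⟩ := isUnit_iff_exists_inv.1
    (IsLocalization.map_units (Localization.Away ((p : ℤ)))
      (⟨(p : ℤ), Submonoid.mem_powers _⟩ : Submonoid.powers ((p : ℤ))))
  rw [Group.fg_iff]
  refine ⟨Set.range (SL4FG.genF (algebraMap ℤ (Localization.Away ((p:ℤ))) (p : ℤ)) ρ hρ),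
    ?_, Set.finite_range _⟩
  refine SL4FG.closure_top (fun x => (SL4FG.phi hpz x).num.natAbs)
    (fun x y hy => SL4FG.eucDiv hp x y hy) _ ρ hρ ?_
  intro x
  obtain ⟨a, n, hx⟩ := SL4FG.rep x
  refine ⟨a, n, ?_⟩
  have h2 : (algebraMap ℤ (Localization.Away ((p:ℤ))) ((p:ℤ)) * ρ) ^ n = 1 := by
    rw [hρ, one_pow]
  calc x = x * ((algebraMap ℤ (Localization.Away ((p:ℤ))) ((p:ℤ)) * ρ) ^ n) := by
        rw [h2, mul_one]
    _ = (x * (algebraMap ℤ (Localization.Away ((p:ℤ))) ((p:ℤ))) ^ n) * ρ ^ n := by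
        rw [mul_pow]; ring
    _ = algebraMap ℤ (Localization.Away ((p:ℤ))) a * ρ ^ n := by rw [← map_pow, hx]
    _ = (a : Localization.Away ((p:ℤ))) * ρ ^ n := by
        rw [eq_intCast (algebraMap ℤ (Localization.Away ((p:ℤ)))) a]
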